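/- Let d_1 be an even positive integer and let v_1^{(1)}, v_1^{(2)}, ..., v_m^{(1)}, v_m^{(2)} be 2m generic vectors in ℝ^{m+1}. Then the system of m equations (v_j^{(1)}·x)^{d_1} + (v_j^{(2)}·x)^{d_1} = 0, j = 1,...,m, has no real solution x ∈ P^m_ℝ, but has exactly d_1^m distinct complex solutions in P^m_ℂ. -/
import Mathlib

open Polynomial Matrix

section Prelude

lemma dense_open_det_ne_zero {V : Type*} [NormedAddCommGroup V] [NormedSpace ℝ V]
    [FiniteDimensional ℝ V] {k : ℕ} (A : V → Matrix (Fin k) (Fin k) ℂ)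
    (hA : ∀ i j, IsLinearMap ℝ fun v => A v i j) (w : V) (hw : (A w).det ≠ 0) :
    IsOpen {v | (A v).det ≠ 0} ∧ Dense {v | (A v).det ≠ 0} := by
  have hcont : Continuous fun v => (A v).det := by
    apply Continuous.matrix_det
    apply continuous_matrix
    intro i j
    exact ((hA i j).mk' _).continuous_of_finiteDimensional
  refine ⟨isOpen_ne.preimage hcont, ?_⟩
  rw [Metric.dense_iff]
  intro v ε hε
  -- the line t ↦ v + t • (w - v)
  set L : ℝ → V := fun t => v + t • (w - v) with hL
  have hAline : ∀ (t : ℝ) i j, A (L t) i j = A v i j + (t : ℂ) * (A w i j - A v i j) := by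
    intro t i j
    have h := hA i j
    have h1 : A (L t) i j = A v i j + t • (A w i j - A v i j) := by
      rw [hL]
      simp only [h.map_add, h.map_smul]
      rw [h.map_sub]
    rw [h1, Complex.real_smul]
  set p : Polynomial ℂ :=
    (Matrix.of fun i j => C (A v i j) + C (A w i j - A v i j) * X).det with hp
  have hkey : ∀ t : ℝ, p.eval (t : ℂ) = (A (L t)).det := by
    intro t
    rw [hp, ← Polynomial.coe_evalRingHom, RingHom.map_det]
    congr 1
    ext i j
    simp [hAline t i j, mul_comm]
  have hL1 : L 1 = w := by simp [hL]
  have hpne : p ≠ 0 := by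
    intro h0
    apply hw
    rw [← hL1, ← hkey 1]
    simp [h0]
  -- the set of real roots is finite
  have hroots : {t : ℝ | p.eval ((t : ℝ) : ℂ) = 0}.Finite := by
    have : {t : ℝ | p.eval ((t : ℝ) : ℂ) = 0}
        = ((↑) : ℝ → ℂ) ⁻¹' {z : ℂ | p.IsRoot z} := rfl
    rw [this]
    exact (Polynomial.finite_setOf_isRoot hpne).preimage Complex.ofReal_injective.injOn
  -- continuity of the line at 0
  have hLc : ContinuousAt L 0 := by fun_prop
  have hL0 : L 0 = v := by simp [hL]
  rcases Metric.continuousAt_iff.mp hLc ε hε with ⟨δ, hδ, hball⟩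
  obtain ⟨t, ht⟩ := (Set.Ioo_infinite hδ).diff hroots |>.nonempty
  refine ⟨L t, ?_, ?_⟩
  · rw [Metric.mem_ball, ← hL0]
    apply hball
    rw [Real.dist_eq, sub_zero, abs_of_pos ht.1.1]
    exact ht.1.2
  · simp only [Set.mem_setOf_eq, ← hkey t]
    exact fun h => ht.2 h


lemma exists_nthRoots_finset (d : ℕ) (hd : 0 < d) :
    ∃ S : Finset ℂ, (∀ z : ℂ, z ∈ S ↔ z ^ d = -1) ∧ S.card = d := by
  have hprim : IsPrimitiveRoot (Complex.exp (2 * Real.pi * Complex.I / d)) d :=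
    Complex.isPrimitiveRoot_exp d hd.ne'
  have hex : ∃ α : ℂ, α ^ d = -1 := IsAlgClosed.exists_pow_nat_eq _ hd
  have hnodup : (nthRoots d (-1 : ℂ)).Nodup :=
    hprim.nthRoots_nodup (by norm_num)
  refine ⟨(nthRoots d (-1 : ℂ)).toFinset, ?_, ?_⟩
  · intro z
    rw [Multiset.mem_toFinset, mem_nthRoots hd]
  · rw [Multiset.toFinset_card_of_nodup hnodup, hprim.card_nthRoots, if_pos hex]


namespace EvenPowerAux

variable (m : ℕ)



variable (m : ℕ)

/-- The complex row `v_j^{(1)} - ζ_j v_j^{(2)}`. -/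
def rowC (v : Fin m → Fin 2 → (Fin (m + 1) → ℝ)) (ζ : Fin m → ℂ) (j : Fin m)
    (t : Fin (m + 1)) : ℂ :=
  (v j 0 t : ℂ) - ζ j * (v j 1 t : ℂ)

/-- The square matrix of the first `m` columns. -/
def Mm (v : Fin m → Fin 2 → (Fin (m + 1) → ℝ)) (ζ : Fin m → ℂ) :
    Matrix (Fin m) (Fin m) ℂ :=
  Matrix.of fun j k => rowC m v ζ j k.castSucc

/-- The last column. -/
def cv (v : Fin m → Fin 2 → (Fin (m + 1) → ℝ)) (ζ : Fin m → ℂ) : Fin m → ℂ :=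
  fun j => rowC m v ζ j (Fin.last m)

/-- The distinguished kernel vector (last coordinate 1). -/
noncomputable def xv (v : Fin m → Fin 2 → (Fin (m + 1) → ℝ)) (ζ : Fin m → ℂ) :
    Fin (m + 1) → ℂ :=
  Fin.snoc (-((Mm m v ζ)⁻¹ *ᵥ cv m v ζ)) 1

lemma xv_last (v : Fin m → Fin 2 → (Fin (m + 1) → ℝ)) (ζ : Fin m → ℂ) :
    xv m v ζ (Fin.last m) = 1 := by
  simp [xv]

lemma xv_ne_zero (v : Fin m → Fin 2 → (Fin (m + 1) → ℝ)) (ζ : Fin m → ℂ) :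
    xv m v ζ ≠ 0 := by
  intro h
  have := xv_last m v ζ
  rw [h] at this
  simp at this

lemma xv_root (v : Fin m → Fin 2 → (Fin (m + 1) → ℝ)) (ζ : Fin m → ℂ)
    (hM : (Mm m v ζ).det ≠ 0) (j : Fin m) :
    ∑ t, rowC m v ζ j t * xv m v ζ t = 0 := by
  rw [Fin.sum_univ_castSucc]
  simp only [xv, Fin.snoc_castSucc, Fin.snoc_last, mul_one]
  have h1 : ∑ k : Fin m, rowC m v ζ j k.castSucc * (-((Mm m v ζ)⁻¹ *ᵥ cv m v ζ)) k
      = (Mm m v ζ *ᵥ (-((Mm m v ζ)⁻¹ *ᵥ cv m v ζ))) j := rfl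
  rw [h1, Matrix.mulVec_neg, Matrix.mulVec_mulVec,
    Matrix.mul_nonsing_inv _ (isUnit_iff_ne_zero.2 hM), Matrix.one_mulVec]
  simp [cv]

lemma ker_eq (v : Fin m → Fin 2 → (Fin (m + 1) → ℝ)) (ζ : Fin m → ℂ)
    (hM : (Mm m v ζ).det ≠ 0) (y : Fin (m + 1) → ℂ)
    (hy : ∀ j, ∑ t, rowC m v ζ j t * y t = 0) :
    y = y (Fin.last m) • xv m v ζ := by
  set z : Fin (m + 1) → ℂ := y - y (Fin.last m) • xv m v ζ with hz
  have hzlast : z (Fin.last m) = 0 := by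
    simp [hz, xv_last]
  have hzrow : ∀ j, ∑ t, rowC m v ζ j t * z t = 0 := by
    intro j
    have : ∀ t, rowC m v ζ j t * z t
        = rowC m v ζ j t * y t - y (Fin.last m) * (rowC m v ζ j t * xv m v ζ t) := by
      intro t
      simp [hz, Pi.sub_apply, Pi.smul_apply, smul_eq_mul]
      ring
    simp only [this, Finset.sum_sub_distrib, ← Finset.mul_sum, hy j, xv_root m v ζ hM j,
      mul_zero, sub_zero]
  have hker : Mm m v ζ *ᵥ (fun k : Fin m => z k.castSucc) = 0 := by
    funext j
    have : (Mm m v ζ *ᵥ fun k : Fin m => z k.castSucc) j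
        = ∑ k : Fin m, rowC m v ζ j k.castSucc * z k.castSucc := rfl
    rw [this]
    have := hzrow j
    rw [Fin.sum_univ_castSucc, hzlast, mul_zero, add_zero] at this
    rw [this]
    rfl
  have hz0 : (fun k : Fin m => z k.castSucc) = 0 := Matrix.eq_zero_of_mulVec_eq_zero hM hker
  have hzz : z = 0 := by
    funext t
    refine Fin.lastCases ?_ ?_ t
    · exact hzlast
    · intro i
      exact congrFun hz0 i
  rw [hz] at hzz
  exact sub_eq_zero.mp hzz





def Bm (v : Fin m → Fin 2 → (Fin (m + 1) → ℝ)) (ζ : Fin m → ℂ) (j : Fin m) :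
    Matrix (Fin (m + 1)) (Fin (m + 1)) ℂ :=
  Matrix.of (Fin.snoc (fun i => rowC m v ζ i) (fun t => (v j 1 t : ℂ)))

def Rm (hm : 0 < m) (v : Fin m → Fin 2 → (Fin (m + 1) → ℝ)) :
    Matrix (Fin (m + 1)) (Fin (m + 1)) ℂ :=
  Matrix.of (Fin.snoc (fun j t => (v j 0 t : ℂ)) (fun t => (v ⟨0, hm⟩ 1 t : ℂ)))

/-- Witness tuple of "generic" vectors. -/
def w₀ : Fin m → Fin 2 → (Fin (m + 1) → ℝ) :=
  fun j => ![Pi.single j.castSucc 1, Pi.single (Fin.last m) 1]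

lemma w₀_zero (j : Fin m) (t : Fin (m + 1)) :
    w₀ m j 0 t = if t = j.castSucc then 1 else 0 := by
  simp [w₀, Pi.single_apply, eq_comm]

lemma w₀_one (j : Fin m) (t : Fin (m + 1)) :
    w₀ m j 1 t = if t = Fin.last m then 1 else 0 := by
  simp [w₀, Pi.single_apply, eq_comm]

lemma Mm_w₀ (ζ : Fin m → ℂ) : Mm m (w₀ m) ζ = 1 := by
  ext j k
  simp only [Mm, Matrix.of_apply, rowC, w₀_zero, w₀_one]
  have h1 : (k.castSucc = Fin.last m) = False := by
    simp [Fin.ext_iff]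
    omega
  have h2 : (k.castSucc = j.castSucc) ↔ (k = j) := by
    simp [Fin.ext_iff]
  simp only [h1, if_false, Complex.ofReal_zero, mul_zero, sub_zero]
  by_cases h : k = j
  · subst h
    simp [Matrix.one_apply]
  · rw [if_neg (fun hh => h (h2.mp hh))]
    simp [Matrix.one_apply, Ne.symm h]

lemma Mm_w₀_det (ζ : Fin m → ℂ) : (Mm m (w₀ m) ζ).det ≠ 0 := by
  rw [Mm_w₀, Matrix.det_one]
  exact one_ne_zero

lemma Rm_w₀_det (hm : 0 < m) : (Rm m hm (w₀ m)).det ≠ 0 := by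
  have : Rm m hm (w₀ m) = 1 := by
    ext p q
    refine Fin.lastCases ?_ ?_ p
    · simp only [Rm, Matrix.of_apply, Fin.snoc_last, w₀_one]
      rw [Matrix.one_apply]
      by_cases h : q = Fin.last m <;> simp [h, eq_comm]
    · intro i
      simp only [Rm, Matrix.of_apply, Fin.snoc_castSucc, w₀_zero]
      rw [Matrix.one_apply]
      by_cases h : q = i.castSucc <;> simp [h, eq_comm]
  rw [this, Matrix.det_one]
  exact one_ne_zero

lemma Bm_w₀_det (ζ : Fin m → ℂ) (j : Fin m) : (Bm m (w₀ m) ζ j).det ≠ 0 := by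
  have htri : (Bm m (w₀ m) ζ j).BlockTriangular id := by
    intro p q hqp
    simp only [id_eq] at hqp
    refine Fin.lastCases ?_ ?_ p hqp
    · intro hq
      simp only [Bm, Matrix.of_apply, Fin.snoc_last, w₀_one]
      have : q ≠ Fin.last m := ne_of_lt hq
      simp [this]
    · intro i hq
      have hql : q ≠ Fin.last m := by
        intro h
        rw [h] at hq
        exact absurd hq (not_lt.2 (Fin.le_last _))
      have hqi : q ≠ i.castSucc := ne_of_lt hq
      simp [Bm, rowC, w₀_zero, w₀_one, hql, hqi]
  rw [Matrix.det_of_upperTriangular htri]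
  have hdiag : ∀ p, Bm m (w₀ m) ζ j p p = 1 := by
    intro p
    refine Fin.lastCases ?_ ?_ p
    · simp [Bm, w₀_one]
    · intro i
      have : i.castSucc ≠ Fin.last m := by
        simp [Fin.ext_iff]; omega
      simp [Bm, rowC, w₀_zero, w₀_one, this]
  simp [hdiag]




lemma lin_rowC (ζ : Fin m → ℂ) (j : Fin m) (t : Fin (m + 1)) :
    IsLinearMap ℝ fun v : Fin m → Fin 2 → (Fin (m + 1) → ℝ) => rowC m v ζ j t := by
  constructor <;> intro a b <;>
    simp [rowC, Pi.add_apply, Pi.smul_apply, smul_eq_mul, Complex.real_smul] <;> ring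

lemma lin_coord (j : Fin m) (i : Fin 2) (t : Fin (m + 1)) :
    IsLinearMap ℝ fun v : Fin m → Fin 2 → (Fin (m + 1) → ℝ) => ((v j i t : ℝ) : ℂ) := by
  constructor <;> intro a b <;>
    simp [Pi.add_apply, Pi.smul_apply, smul_eq_mul, Complex.real_smul]

lemma lin_Mm (ζ : Fin m → ℂ) (i k : Fin m) :
    IsLinearMap ℝ fun v : Fin m → Fin 2 → (Fin (m + 1) → ℝ) => Mm m v ζ i k :=
  lin_rowC m ζ i k.castSucc

lemma lin_Bm (ζ : Fin m → ℂ) (j : Fin m) (p q : Fin (m + 1)) :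
    IsLinearMap ℝ fun v : Fin m → Fin 2 → (Fin (m + 1) → ℝ) => Bm m v ζ j p q := by
  refine Fin.lastCases ?_ ?_ p
  · simpa [Bm] using lin_coord m j 1 q
  · intro i
    simpa [Bm] using lin_rowC m ζ i q

lemma lin_Rm (hm : 0 < m) (p q : Fin (m + 1)) :
    IsLinearMap ℝ fun v : Fin m → Fin 2 → (Fin (m + 1) → ℝ) => Rm m hm v p q := by
  refine Fin.lastCases ?_ ?_ p
  · simpa [Rm] using lin_coord m ⟨0, hm⟩ 1 q
  · intro i
    simpa [Rm] using lin_coord m i 0 q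

end EvenPowerAux

end Prelude

open EvenPowerAux

/-- Let `d₁` be an even positive integer and let
`v_1^{(1)}, v_1^{(2)}, …, v_m^{(1)}, v_m^{(2)}` be `2m` generic vectors in `ℝ^{m+1}`.
Then the system of `m` equations `(v_j^{(1)}⬝x)^{d₁} + (v_j^{(2)}⬝x)^{d₁} = 0`,
`j = 1, …, m`, has no real solution in `ℙ^m_ℝ`, but has exactly `d₁^m` distinct complex
solutions in `ℙ^m_ℂ`.  Genericity is expressed by a dense open set of tuples of
vectors. -/
theorem even_power_sum_system_no_real_solutions
    (m d₁ : ℕ) (hm : 0 < m) (hd : 0 < d₁) (heven : Even d₁) :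
    ∃ U : Set (Fin m → Fin 2 → (Fin (m + 1) → ℝ)),
      IsOpen U ∧ Dense U ∧ ∀ v ∈ U,
        ({x : Projectivization ℝ (Fin (m + 1) → ℝ) |
            ∀ j, (∑ t, v j 0 t * x.rep t) ^ d₁ + (∑ t, v j 1 t * x.rep t) ^ d₁ = 0}
          = (∅ : Set (Projectivization ℝ (Fin (m + 1) → ℝ)))) ∧
        Set.encard {x : Projectivization ℂ (Fin (m + 1) → ℂ) |
            ∀ j, (∑ t, (v j 0 t : ℂ) * x.rep t) ^ d₁
               + (∑ t, (v j 1 t : ℂ) * x.rep t) ^ d₁ = 0}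
          = ((d₁ ^ m : ℕ) : ℕ∞) := by
  classical
  obtain ⟨Sfin, hSmem, hScard⟩ := exists_nthRoots_finset d₁ hd
  set T : Finset (Fin m → ℂ) := Fintype.piFinset fun _ => Sfin with hT
  have hTmem : ∀ ζ : Fin m → ℂ, ζ ∈ T ↔ ∀ j, ζ j ∈ Sfin := fun ζ => Fintype.mem_piFinset
  set F : {ζ : Fin m → ℂ // ζ ∈ T} × Option (Fin m) →
      Set (Fin m → Fin 2 → (Fin (m + 1) → ℝ)) :=
    fun q => Option.elim q.2 {v | (Mm m v q.1.1).det ≠ 0}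
      (fun j => {v | (Bm m v q.1.1 j).det ≠ 0}) with hF
  have hFq : ∀ q, IsOpen (F q) ∧ Dense (F q) := by
    rintro ⟨⟨ζ, hζ⟩, j⟩
    cases j with
    | none =>
        exact dense_open_det_ne_zero (fun v => Mm m v ζ) (fun i k => lin_Mm m ζ i k)
          (w₀ m) (Mm_w₀_det m ζ)
    | some j =>
        exact dense_open_det_ne_zero (fun v => Bm m v ζ j) (fun p q => lin_Bm m ζ j p q)
          (w₀ m) (Bm_w₀_det m ζ j)
  have hRdo := dense_open_det_ne_zero (fun v => Rm m hm v) (fun p q => lin_Rm m hm p q)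
    (w₀ m) (Rm_w₀_det m hm)
  refine ⟨{v | (Rm m hm v).det ≠ 0} ∩ ⋂ q, F q, ?_, ?_, ?_⟩
  · exact hRdo.1.inter (isOpen_iInter_of_finite fun q => (hFq q).1)
  · exact hRdo.2.inter_of_isOpen_left
      (dense_iInter_of_isOpen (fun q => (hFq q).1) (fun q => (hFq q).2)) hRdo.1
  intro v hv
  have hRv : (Rm m hm v).det ≠ 0 := hv.1
  have hMv : ∀ ζ ∈ T, (Mm m v ζ).det ≠ 0 := by
    intro ζ hζ
    exact Set.mem_iInter.mp hv.2 ⟨⟨ζ, hζ⟩, none⟩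
  have hBv : ∀ ζ ∈ T, ∀ j, (Bm m v ζ j).det ≠ 0 := by
    intro ζ hζ j
    exact Set.mem_iInter.mp hv.2 ⟨⟨ζ, hζ⟩, some j⟩
  constructor
  · -- no real solutions
    ext x
    simp only [Set.mem_setOf_eq, Set.mem_empty_iff_false, iff_false]
    intro hx
    have hzero : ∀ j : Fin m, (∑ t, v j 0 t * x.rep t) = 0 ∧ (∑ t, v j 1 t * x.rep t) = 0 := by
      intro j
      have h := hx j
      have e0 : (0 : ℝ) ≤ (∑ t, v j 0 t * x.rep t) ^ d₁ := heven.pow_nonneg _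
      have e1 : (0 : ℝ) ≤ (∑ t, v j 1 t * x.rep t) ^ d₁ := heven.pow_nonneg _
      constructor
      · exact pow_eq_zero_iff hd.ne' |>.mp (by linarith)
      · exact pow_eq_zero_iff hd.ne' |>.mp (by linarith)
    have hker : Rm m hm v *ᵥ (fun t => (x.rep t : ℂ)) = 0 := by
      funext p
      have hdef : (Rm m hm v *ᵥ fun t => (x.rep t : ℂ)) p
          = ∑ t, Rm m hm v p t * (x.rep t : ℂ) := rfl
      rw [hdef]
      refine Fin.lastCases ?_ ?_ p
      · simp only [Rm, Matrix.of_apply, Fin.snoc_last, Pi.zero_apply]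
        exact_mod_cast congrArg (Complex.ofReal) (hzero ⟨0, hm⟩).2
      · intro i
        simp only [Rm, Matrix.of_apply, Fin.snoc_castSucc, Pi.zero_apply]
        exact_mod_cast congrArg (Complex.ofReal) (hzero i).1
    have h0 := Matrix.eq_zero_of_mulVec_eq_zero hRv hker
    apply x.rep_nonzero
    funext t
    have ht := congrFun h0 t
    simp only [Pi.zero_apply] at ht ⊢
    exact_mod_cast ht
  · -- exactly d₁ ^ m complex solutions
    set Φ : (Fin m → ℂ) → Projectivization ℂ (Fin (m + 1) → ℂ) :=
      fun ζ => Projectivization.mk ℂ (xv m v ζ) (xv_ne_zero m v ζ) with hΦ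
    have hrow_sum : ∀ (ζ : Fin m → ℂ) (j : Fin m) (y : Fin (m + 1) → ℂ),
        ∑ t, rowC m v ζ j t * y t
          = (∑ t, (v j 0 t : ℂ) * y t) - ζ j * ∑ t, (v j 1 t : ℂ) * y t := by
      intro ζ j y
      simp [rowC, sub_mul, Finset.sum_sub_distrib, Finset.mul_sum, mul_assoc]
    have himg : {x : Projectivization ℂ (Fin (m + 1) → ℂ) |
        ∀ j, (∑ t, (v j 0 t : ℂ) * x.rep t) ^ d₁
           + (∑ t, (v j 1 t : ℂ) * x.rep t) ^ d₁ = 0} = Φ '' ↑T := by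
      ext x
      simp only [Set.mem_setOf_eq, Set.mem_image, Finset.mem_coe]
      constructor
      · intro hx
        obtain ⟨ξ, hξ⟩ : ∃ ξ : ℂ, ξ ∈ Sfin := by
          have hc : 0 < Sfin.card := hScard ▸ hd
          exact Finset.card_pos.mp hc
        set ζ : Fin m → ℂ := fun j =>
          if (∑ t, (v j 1 t : ℂ) * x.rep t) = 0 then ξ
          else (∑ t, (v j 0 t : ℂ) * x.rep t) / (∑ t, (v j 1 t : ℂ) * x.rep t) with hζdef
        have hζT : ζ ∈ T := by
          rw [hTmem]
          intro j
          rw [hζdef]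
          by_cases hB : (∑ t, (v j 1 t : ℂ) * x.rep t) = 0
          · simpa [hB] using hξ
          · simp only [hB, if_false]
            rw [hSmem, div_pow]
            have hx' := hx j
            have hA : (∑ t, (v j 0 t : ℂ) * x.rep t) ^ d₁
                = -((∑ t, (v j 1 t : ℂ) * x.rep t) ^ d₁) := by linear_combination hx'
            rw [hA, neg_div, div_self (pow_ne_zero _ hB)]
        have hrows : ∀ j, ∑ t, rowC m v ζ j t * x.rep t = 0 := by
          intro j
          rw [hrow_sum, hζdef]
          by_cases hB : (∑ t, (v j 1 t : ℂ) * x.rep t) = 0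
          · simp only [hB, if_true, mul_zero, sub_zero]
            have hx' := hx j
            rw [hB] at hx'
            simp only [zero_pow hd.ne', add_zero] at hx'
            exact pow_eq_zero_iff hd.ne' |>.mp hx'
          · simp only [hB, if_false]
            rw [div_mul_cancel₀ _ hB, sub_self]
        have hy := ker_eq m v ζ (hMv ζ hζT) x.rep hrows
        refine ⟨ζ, hζT, ?_⟩
        simp only [hΦ]
        symm
        conv_lhs => rw [← x.mk_rep]
        rw [Projectivization.mk_eq_mk_iff']
        exact ⟨x.rep (Fin.last m), hy.symm⟩
      · rintro ⟨ζ, hζT, rfl⟩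
        intro j
        obtain ⟨a, ha⟩ := Projectivization.exists_smul_eq_mk_rep ℂ (xv m v ζ) (xv_ne_zero m v ζ)
        have hrep : (Φ ζ).rep = fun t => (a : ℂ) * xv m v ζ t := by
          simp only [hΦ]
          funext t
          rw [← ha]
          rfl
        rw [hrep]
        have hAB : (∑ t, (v j 0 t : ℂ) * xv m v ζ t)
            = ζ j * ∑ t, (v j 1 t : ℂ) * xv m v ζ t := by
          have h := xv_root m v ζ (hMv ζ hζT) j
          rw [hrow_sum] at h
          exact sub_eq_zero.mp h
        have hsA : ∑ t, (v j 0 t : ℂ) * ((a : ℂ) * xv m v ζ t)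
            = (a : ℂ) * ∑ t, (v j 0 t : ℂ) * xv m v ζ t := by
          rw [Finset.mul_sum]
          exact Finset.sum_congr rfl fun t _ => by ring
        have hsB : ∑ t, (v j 1 t : ℂ) * ((a : ℂ) * xv m v ζ t)
            = (a : ℂ) * ∑ t, (v j 1 t : ℂ) * xv m v ζ t := by
          rw [Finset.mul_sum]
          exact Finset.sum_congr rfl fun t _ => by ring
        have hζj : ζ j ^ d₁ = -1 := (hSmem _).mp ((hTmem ζ).mp hζT j)
        rw [hsA, hsB, hAB, mul_pow, mul_pow, mul_pow, hζj]
        ring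
    have hinj : Set.InjOn Φ ↑T := by
      intro ζ hζT ζ' hζT' hEq
      by_contra hne
      obtain ⟨j, hj⟩ : ∃ j, ζ j ≠ ζ' j := by
        by_contra hall
        push_neg at hall
        exact hne (funext hall)
      have hζT₀ : ζ ∈ T := Finset.mem_coe.mp hζT
      have hζT₀' : ζ' ∈ T := Finset.mem_coe.mp hζT'
      simp only [hΦ] at hEq
      rw [Projectivization.mk_eq_mk_iff'] at hEq
      obtain ⟨a, ha⟩ := hEq
      have h2 : ∑ t, rowC m v ζ' j t * xv m v ζ t = 0 := by
        have hx' := xv_root m v ζ' (hMv ζ' hζT₀') j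
        calc ∑ t, rowC m v ζ' j t * xv m v ζ t
            = ∑ t, rowC m v ζ' j t * (a * xv m v ζ' t) := by
              refine Finset.sum_congr rfl fun t _ => ?_
              rw [← ha]
              rfl
          _ = a * ∑ t, rowC m v ζ' j t * xv m v ζ' t := by
              rw [Finset.mul_sum]
              exact Finset.sum_congr rfl fun t _ => by ring
          _ = 0 := by rw [hx', mul_zero]
      have h1 := xv_root m v ζ (hMv ζ hζT₀) j
      rw [hrow_sum] at h1 h2
      have hBzero : (∑ t, (v j 1 t : ℂ) * xv m v ζ t) = 0 := by
        have hdiff : (ζ' j - ζ j) * (∑ t, (v j 1 t : ℂ) * xv m v ζ t) = 0 := by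
          linear_combination h1 - h2
        rcases mul_eq_zero.mp hdiff with h | h
        · exact absurd (sub_eq_zero.mp h) (Ne.symm hj)
        · exact h
      have hAzero : (∑ t, (v j 0 t : ℂ) * xv m v ζ t) = 0 := by
        rw [hBzero, mul_zero, sub_zero] at h1
        exact h1
      have hkerB : Bm m v ζ j *ᵥ xv m v ζ = 0 := by
        funext p
        have hdef : (Bm m v ζ j *ᵥ xv m v ζ) p = ∑ t, Bm m v ζ j p t * xv m v ζ t := rfl
        rw [hdef]
        refine Fin.lastCases ?_ ?_ p
        · simp only [Bm, Matrix.of_apply, Fin.snoc_last, Pi.zero_apply]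
          exact hBzero
        · intro i
          simp only [Bm, Matrix.of_apply, Fin.snoc_castSucc, Pi.zero_apply]
          exact xv_root m v ζ (hMv ζ hζT₀) i
      exact xv_ne_zero m v ζ (Matrix.eq_zero_of_mulVec_eq_zero (hBv ζ hζT₀ j) hkerB)
    rw [himg, hinj.encard_image, Set.encard_coe_eq_coe_finsetCard, hT,
      Fintype.card_piFinset]
    simp [hScard, Finset.prod_const, Finset.card_univ]
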